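/- Let p be a prime, q = p^e a power of p, ℓ an odd prime different from p, and n a positive integer divisible by neither p nor ℓ. Let γ be an integer, τ the least positive integer with γ·q^τ ≡ γ (mod n), and assume ℓ does not divide q^τ − 1; set ρ = ord_ℓ(q^τ) and v' = v_ℓ(q^{τρ} − 1). Then for every nonzero integer δ with δ ≡ γ (mod n) and every N ≥ 1, the size of the q-cyclotomic coset modulo ℓ^N n containing δ equals τ if v_ℓ(δ) ≥ N, and equals τ·ρ·ℓ^{max(0, N − v_ℓ(δ) − v')} if v_ℓ(δ) < N. -/

import Mathlib

theorem stmt_13 (p e q ℓ n : ℕ) (hp : p.Prime) (he : 0 < e) (hq : q = p ^ e)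
    (hℓ : ℓ.Prime) (hℓ2 : ℓ ≠ 2) (hℓp : ℓ ≠ p)
    (hn : 0 < n) (hnp : ¬ p ∣ n) (hnℓ : ¬ ℓ ∣ n)
    (γ : ℤ) (τ : ℕ)
    (hτ : IsLeast {t : ℕ | 0 < t ∧ γ * (q : ℤ) ^ t ≡ γ [ZMOD (n : ℤ)]} τ)
    (hnd : ¬ (ℓ : ℤ) ∣ (q : ℤ) ^ τ - 1)
    (ρ v' : ℕ) (hρ : ρ = orderOf ((q : ZMod ℓ) ^ τ))
    (hv' : v' = padicValInt ℓ ((q : ℤ) ^ (τ * ρ) - 1)) :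
    ∀ δ : ℤ, δ ≠ 0 → δ ≡ γ [ZMOD (n : ℤ)] → ∀ N : ℕ, 1 ≤ N →
      (N ≤ padicValInt ℓ δ →
        IsLeast {j : ℕ | 0 < j ∧ δ * (q : ℤ) ^ j ≡ δ [ZMOD ((ℓ ^ N * n : ℕ) : ℤ)]} τ) ∧
      (padicValInt ℓ δ < N →
        IsLeast {j : ℕ | 0 < j ∧ δ * (q : ℤ) ^ j ≡ δ [ZMOD ((ℓ ^ N * n : ℕ) : ℤ)]}
          (τ * ρ * ℓ ^ (N - (padicValInt ℓ δ + v')))) := by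
  haveI : Fact ℓ.Prime := ⟨hℓ⟩
  obtain ⟨⟨hτpos, hτcong⟩, hτleast⟩ := hτ
  have hq1 : 1 < q := by
    subst hq; exact Nat.one_lt_pow he.ne' hp.one_lt
  have hq1' : 1 < (q : ℤ) := by exact_mod_cast hq1
  have hℓq : ¬ (ℓ : ℤ) ∣ (q : ℤ) := by
    rw [Int.natCast_dvd_natCast]
    subst hq
    intro h
    exact hℓp ((Nat.prime_dvd_prime_iff_eq hℓ hp).mp (hℓ.dvd_of_dvd_pow h))
  -- multiples of τ work mod n
  have hmul : ∀ s : ℕ, γ * (q : ℤ) ^ (τ * s) ≡ γ [ZMOD (n : ℤ)] := by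
    intro s
    induction s with
    | zero => simp
    | succ s ih =>
      have e1 : γ * (q : ℤ) ^ (τ * (s + 1)) = γ * (q : ℤ) ^ (τ * s) * (q : ℤ) ^ τ := by
        rw [mul_assoc, ← pow_add, Nat.mul_succ]
      rw [e1]
      exact (ih.mul_right _).trans hτcong
  have hτdvd : ∀ j : ℕ, (γ * (q : ℤ) ^ j ≡ γ [ZMOD (n : ℤ)] ↔ τ ∣ j) := by
    intro j
    constructor
    · intro h
      have e1 : γ * (q : ℤ) ^ j = γ * (q : ℤ) ^ (τ * (j / τ)) * (q : ℤ) ^ (j % τ) := by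
        rw [mul_assoc, ← pow_add, Nat.div_add_mod]
      rw [e1] at h
      have h3 := (hmul (j / τ)).mul_right ((q : ℤ) ^ (j % τ))
      have h2 : γ * (q : ℤ) ^ (j % τ) ≡ γ [ZMOD (n : ℤ)] := h3.symm.trans h
      by_contra hnd2
      have hr : 0 < j % τ := Nat.pos_of_ne_zero fun h0 => hnd2 (Nat.dvd_of_mod_eq_zero h0)
      exact absurd (hτleast ⟨hr, h2⟩) (not_le.mpr (Nat.mod_lt _ hτpos))
    · rintro ⟨s, rfl⟩; exact hmul s
  -- valuation conversion
  have hval : ∀ z : ℤ, z ≠ 0 → (padicValInt ℓ z : ℕ∞) = emultiplicity (ℓ : ℤ) z := by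
    intro z hz
    rw [padicValInt, padicValNat_eq_emultiplicity (Int.natAbs_pos.mpr hz).ne',
      Int.emultiplicity_natAbs]
  -- order divisibility
  have hρ0 : 0 < ρ := by
    rw [hρ]
    have hqz : ((q : ZMod ℓ)) ≠ 0 := by
      rw [Ne, ZMod.natCast_eq_zero_iff]
      exact fun h => hℓq (Int.natCast_dvd_natCast.mpr h)
    have hne : ((q : ZMod ℓ)) ^ τ ≠ 0 := pow_ne_zero _ hqz
    have hfin : IsOfFinOrder ((q : ZMod ℓ) ^ τ) :=
      isOfFinOrder_iff_pow_eq_one.mpr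
        ⟨ℓ - 1, by have := hℓ.two_le; omega, ZMod.pow_card_sub_one_eq_one hne⟩
    exact hfin.orderOf_pos
  have Ldvd : ∀ k : ℕ, ((ℓ : ℤ) ∣ (q : ℤ) ^ (τ * k) - 1 ↔ ρ ∣ k) := by
    intro k
    rw [← ZMod.intCast_zmod_eq_zero_iff_dvd]
    push_cast
    rw [sub_eq_zero, pow_mul, hρ]
    rw [orderOf_dvd_iff_pow_eq_one]
  have hρ1 : ρ ≠ 1 := by
    intro h1
    apply hnd
    have := (Ldvd 1).mpr (h1 ▸ dvd_rfl)
    simpa using this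
  have hτρpos : 0 < τ * ρ := Nat.mul_pos hτpos hρ0
  have hx1 : (ℓ : ℤ) ∣ (q : ℤ) ^ (τ * ρ) - 1 := (Ldvd ρ).mpr dvd_rfl
  have hℓint : Prime (ℓ : ℤ) := Nat.prime_iff_prime_int.mp hℓ
  have hx : ¬ (ℓ : ℤ) ∣ (q : ℤ) ^ (τ * ρ) := fun h => hℓq (hℓint.dvd_of_dvd_pow h)
  -- LTE
  have hpow_ne : ∀ m : ℕ, 0 < m → (q : ℤ) ^ m - 1 ≠ 0 := by
    intro m hm
    have : 1 < (q : ℤ) ^ m := one_lt_pow₀ hq1' hm.ne'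
    omega
  have hLTE : ∀ k : ℕ, 0 < k →
      padicValInt ℓ ((q : ℤ) ^ (τ * ρ * k) - 1) = v' + padicValNat ℓ k := by
    intro k hk
    have hdvd' : (ℓ : ℤ) ∣ (q : ℤ) ^ (τ * ρ) - 1 ^ 1 := by simpa using hx1
    have key := Int.emultiplicity_pow_sub_pow hℓ (hℓ.odd_of_ne_two hℓ2) (by simpa using hx1) hx k
    rw [one_pow, ← pow_mul] at key
    have h1 : (q : ℤ) ^ (τ * ρ * k) - 1 ≠ 0 := hpow_ne _ (Nat.mul_pos hτρpos hk)
    have h2 : (q : ℤ) ^ (τ * ρ) - 1 ≠ 0 := hpow_ne _ hτρpos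
    rw [← hval _ h1, ← hval _ h2, ← padicValNat_eq_emultiplicity hk.ne'] at key
    rw [hv']
    exact_mod_cast key
  intro δ hδ0 hδγ N hN
  have hcopN : IsCoprime ((ℓ : ℤ) ^ N) ((n : ℤ)) := by
    have h1 : Nat.Coprime (ℓ ^ N) n := (hℓ.coprime_iff_not_dvd.mpr hnℓ).pow_left N
    have h2 := Nat.isCoprime_iff_coprime.mpr h1
    push_cast at h2
    exact h2
  set v : ℕ := padicValInt ℓ δ with hvdef
  have hcast : ((ℓ ^ N * n : ℕ) : ℤ) = (ℓ : ℤ) ^ N * (n : ℤ) := by push_cast; ring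
  have hmem : ∀ j : ℕ, 0 < j →
      (δ * (q : ℤ) ^ j ≡ δ [ZMOD ((ℓ ^ N * n : ℕ) : ℤ)] ↔
        τ ∣ j ∧ N ≤ v + padicValInt ℓ ((q : ℤ) ^ j - 1)) := by
    intro j hj
    have hqj : (q : ℤ) ^ j - 1 ≠ 0 := hpow_ne j hj
    have hprod : δ * ((q : ℤ) ^ j - 1) ≠ 0 := mul_ne_zero hδ0 hqj
    have e0 : δ - δ * (q : ℤ) ^ j = -(δ * ((q : ℤ) ^ j - 1)) := by ring
    constructor
    · intro h
      have hd : ((ℓ ^ N * n : ℕ) : ℤ) ∣ δ - δ * (q : ℤ) ^ j := Int.ModEq.dvd h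
      rw [e0, dvd_neg, hcast] at hd
      have hdn : (n : ℤ) ∣ δ * ((q : ℤ) ^ j - 1) := dvd_trans (dvd_mul_left _ _) hd
      have hdl : (ℓ : ℤ) ^ N ∣ δ * ((q : ℤ) ^ j - 1) := dvd_trans (dvd_mul_right _ _) hd
      constructor
      · apply (hτdvd j).mp
        have h1 : δ * (q : ℤ) ^ j ≡ δ [ZMOD (n : ℤ)] := by
          rw [Int.modEq_iff_dvd, e0, dvd_neg]
          exact hdn
        exact (hδγ.symm.mul_right _).trans (h1.trans hδγ)
      · rcases (padicValInt_dvd_iff N (δ * ((q : ℤ) ^ j - 1))).mp hdl with h0 | hle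
        · exact absurd h0 hprod
        · rwa [padicValInt.mul hδ0 hqj] at hle
    · rintro ⟨hτj, hle⟩
      have hdn : (n : ℤ) ∣ δ * ((q : ℤ) ^ j - 1) := by
        have hγ : γ * (q : ℤ) ^ j ≡ γ [ZMOD (n : ℤ)] := (hτdvd j).mpr hτj
        have h1 : δ * (q : ℤ) ^ j ≡ δ [ZMOD (n : ℤ)] :=
          (hδγ.mul_right _).trans (hγ.trans hδγ.symm)
        have h2 := Int.ModEq.dvd h1
        rwa [e0, dvd_neg] at h2
      have hdl : (ℓ : ℤ) ^ N ∣ δ * ((q : ℤ) ^ j - 1) := by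
        rw [padicValInt_dvd_iff]
        right
        rwa [padicValInt.mul hδ0 hqj]
      have hboth : (ℓ : ℤ) ^ N * (n : ℤ) ∣ δ * ((q : ℤ) ^ j - 1) := hcopN.mul_dvd hdl hdn
      rw [Int.modEq_iff_dvd, e0, hcast, dvd_neg]
      exact hboth
  constructor
  · intro hcase
    constructor
    · exact ⟨hτpos, (hmem τ hτpos).mpr ⟨dvd_rfl, le_trans hcase (Nat.le_add_right _ _)⟩⟩
    · intro j hj
      exact Nat.le_of_dvd hj.1 ((hmem j hj.1).mp hj.2).1
  · intro hcase
    set w : ℕ := N - (v + v') with hwdef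
    have hℓw : 0 < ℓ ^ w := pow_pos hℓ.pos w
    have hj0pos : 0 < τ * ρ * ℓ ^ w := Nat.mul_pos hτρpos hℓw
    constructor
    · refine ⟨hj0pos, (hmem _ hj0pos).mpr ⟨⟨ρ * ℓ ^ w, by ring⟩, ?_⟩⟩
      rw [hLTE _ hℓw, padicValNat.prime_pow]
      omega
    · intro j hj
      have hjpos := hj.1
      obtain ⟨⟨k, rfl⟩, hle⟩ := (hmem j hj.1).mp hj.2
      have hk : 0 < k := Nat.pos_of_ne_zero fun h0 => by
        rw [h0, mul_zero] at hjpos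
        exact lt_irrefl 0 hjpos
      have hw1 : 0 < padicValInt ℓ ((q : ℤ) ^ (τ * k) - 1) := by omega
      have hdl1 : (ℓ : ℤ) ∣ (q : ℤ) ^ (τ * k) - 1 := by
        have h2 := (padicValInt_dvd_iff 1 ((q : ℤ) ^ (τ * k) - 1)).mpr (Or.inr hw1)
        simpa using h2
      obtain ⟨k', rfl⟩ := (Ldvd k).mp hdl1
      have hk' : 0 < k' := Nat.pos_of_ne_zero fun h0 => by
        rw [h0, mul_zero] at hk
        exact lt_irrefl 0 hk
      rw [← mul_assoc] at hle
      rw [hLTE k' hk'] at hle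
      have hu : w ≤ padicValNat ℓ k' := by omega
      have h2 : ℓ ^ w ≤ k' :=
        le_trans (Nat.pow_le_pow_right hℓ.pos hu) (Nat.le_of_dvd hk' pow_padicValNat_dvd)
      calc τ * ρ * ℓ ^ w ≤ τ * ρ * k' := Nat.mul_le_mul_left _ h2
        _ = τ * (ρ * k') := mul_assoc _ _ _
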